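/- Under the hypotheses of the projection theorem (Jones' conditions with constant κ_J), the composition Q ∘ B is the identity on SL^∞, where B f = Σ_I (⟨f,h_I⟩/‖h_I‖₂²) b_I and Q f = Σ_I (⟨f,b_I⟩/‖b_I‖₂²) h_I. Consequently P = B Q is a bounded projection of norm at most κ_J^{1/2}, the range of B is complemented in SL^∞, and B is an isomorphism onto its range. -/

import Mathlib

/- Setup: dyadic intervals on [0,1), L^∞-normalized Haar coefficients, the SL^∞
square-function norm, the dyadic H^1 norm, and the L² pairing, all expressed on
the space `Dy → ℝ` of Haar coefficient sequences. -/

open MeasureTheory Filter ENNReal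

noncomputable section

/-- Dyadic intervals, encoded as pairs (n, k) with k < 2^n. -/
abbrev Dy := {p : ℕ × ℕ // p.2 < 2 ^ p.1}

/-- The level (frequency) of a dyadic interval. -/
def dlev (I : Dy) : ℕ := I.val.1

/-- The dyadic interval [k/2^n, (k+1)/2^n) as a subset of ℝ. -/
def dint (I : Dy) : Set ℝ :=
  Set.Ico ((I.val.2 : ℝ) / 2 ^ I.val.1) ((I.val.2 + 1 : ℝ) / 2 ^ I.val.1)

/-- The length |I| = 2^{-n} of a dyadic interval. -/
def dlen (I : Dy) : ℝ := ((2 : ℝ) ^ I.val.1)⁻¹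

/-- The square function (Σ_I a_I² 1_I(x)) of the Haar series with coefficients `a`. -/
def sqFn (a : Dy → ℝ) (x : ℝ) : ℝ≥0∞ :=
  ∑' I : Dy, Set.indicator (dint I) (fun _ => ENNReal.ofReal ((a I) ^ 2)) x

/-- The SL^∞ norm: ‖Σ a_I h_I‖ = sup_x (Σ a_I² 1_I(x))^{1/2}. -/
def slNorm (a : Dy → ℝ) : ℝ≥0∞ := ⨆ x : ℝ, sqFn a x ^ (1 / 2 : ℝ)

/-- The dyadic H^1 norm: ∫₀¹ (Σ a_I² 1_I(x))^{1/2} dx. -/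
def h1Norm (a : Dy → ℝ) : ℝ≥0∞ := ∫⁻ x in Set.Ico (0 : ℝ) 1, sqFn a x ^ (1 / 2 : ℝ)

/-- The L² pairing ⟨f, g⟩ = Σ_I a_I b_I |I| of two Haar series. -/
def pairing (a b : Dy → ℝ) : ℝ := ∑' I : Dy, a I * b I * dlen I


open scoped ENNReal

/-- The set B_I = ⋃_{K ∈ ℬ_I} K for a collection ℬ_I of dyadic intervals. -/
def unionBD (ℬ : Dy → Set Dy) (I : Dy) : Set ℝ := ⋃ K ∈ ℬ I, dint K

/-- Jones' compatibility conditions (J1)–(J4) with constant κ for a family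
(ℬ_I : I ∈ ℐ) of collections of dyadic intervals. -/
def JonesD (κ : ℝ≥0∞) (ℐ : Set Dy) (ℬ : Dy → Set Dy) : Prop :=
  -- (J1): finitely many building blocks (dyadic intervals are automatically
  -- measurable, nested and of positive measure).
  (Set.Finite (⋃ I ∈ ℐ, ℬ I)) ∧
  -- (J2): each ℬ_I is nonempty with pairwise disjoint members; distinct
  -- collections are disjoint.
  (∀ I ∈ ℐ, (ℬ I).Nonempty) ∧
  (∀ I ∈ ℐ, (ℬ I).Pairwise fun K K' => Disjoint (dint K) (dint K')) ∧
  (∀ I₀ ∈ ℐ, ∀ I₁ ∈ ℐ, I₀ ≠ I₁ → Disjoint (ℬ I₀) (ℬ I₁)) ∧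
  -- (J3):
  (∀ I₀ ∈ ℐ, ∀ I₁ ∈ ℐ, Disjoint (dint I₀) (dint I₁) →
    Disjoint (unionBD ℬ I₀) (unionBD ℬ I₁)) ∧
  (∀ I₀ ∈ ℐ, ∀ I₁ ∈ ℐ, dint I₀ ⊆ dint I₁ → unionBD ℬ I₀ ⊆ unionBD ℬ I₁) ∧
  -- (J4):
  (∀ I₀ ∈ ℐ, ∀ I ∈ ℐ, dint I₀ ⊆ dint I → ∀ K ∈ ℬ I,
    κ⁻¹ * (MeasureTheory.volume (unionBD ℬ I₀) / MeasureTheory.volume (unionBD ℬ I))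
      ≤ MeasureTheory.volume (dint K ∩ unionBD ℬ I₀) / MeasureTheory.volume (dint K))

/-- The Haar coefficients of B f = Σ_{I ∈ ℐ} (⟨f, h_I⟩/‖h_I‖₂²) b_I, where
b_I = Σ_{K ∈ ℬ_I} h_K: the coefficient of h_K is a_I for the (unique) I ∈ ℐ
with K ∈ ℬ_I. -/
def Bop (ℐ : Set Dy) (ℬ : Dy → Set Dy) (a : Dy → ℝ) : Dy → ℝ :=
  fun K => ∑' I : {I : Dy // I ∈ ℐ ∧ K ∈ ℬ I}, a I.val

/-- The Haar coefficients of Q f = Σ_{I ∈ ℐ} (⟨f, b_I⟩/‖b_I‖₂²) h_I: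
the coefficient of h_I (I ∈ ℐ) is (Σ_{K ∈ ℬ_I} a_K |K|) / (Σ_{K ∈ ℬ_I} |K|). -/
def Qop (ℐ : Set Dy) (ℬ : Dy → Set Dy) (a : Dy → ℝ) : Dy → ℝ :=
  fun I => Set.indicator ℐ
    (fun _ => (∑' K : ℬ I, a K.val * dlen K.val) / (∑' K : ℬ I, dlen K.val)) I

lemma dlen_pos (I : Dy) : 0 < dlen I := by unfold dlen; positivity

lemma dint_nonempty (I : Dy) : (dint I).Nonempty := by
  refine Set.nonempty_Ico.2 ?_
  have h : (0:ℝ) < 2 ^ I.val.1 := by positivity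
  rw [div_lt_div_iff_of_pos_right h]
  linarith

lemma volume_dint (I : Dy) : volume (dint I) = ENNReal.ofReal (dlen I) := by
  rw [dint, Real.volume_Ico]
  congr 1
  have : (0:ℝ) < 2 ^ I.val.1 := by positivity
  unfold dlen; ring

lemma dint_subset_Ico (I : Dy) : dint I ⊆ Set.Ico (0:ℝ) 1 := by
  intro x hx
  obtain ⟨h1, h2⟩ := hx
  have hp : (0:ℝ) < 2 ^ I.val.1 := by positivity
  have hk : (I.val.2 : ℝ) + 1 ≤ 2 ^ I.val.1 := by
    have := I.property
    exact_mod_cast Nat.succ_le_of_lt this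
  constructor
  · have : (0:ℝ) ≤ (I.val.2 : ℝ) / 2 ^ I.val.1 := by positivity
    linarith
  · calc x < ((I.val.2:ℝ) + 1) / 2 ^ I.val.1 := h2
      _ ≤ 1 := by rw [div_le_one hp]; exact hk

lemma dint_subset_of_lev_le (I J : Dy) (hm : J.val.1 ≤ I.val.1)
    (hq : I.val.2 / 2 ^ (I.val.1 - J.val.1) = J.val.2) : dint I ⊆ dint J := by
  set n := I.val.1 with hn; set m := J.val.1 with hmm; set k := I.val.2 with hk
  set t := 2 ^ (n - m) with ht
  have htpos : 0 < t := (by positivity)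
  have h1 : (k / t) * t ≤ k := Nat.div_mul_le_self k t
  have h2 : k + 1 ≤ (k / t + 1) * t := by
    have e1 := Nat.div_add_mod k t
    have e2 := Nat.mod_lt k htpos
    have e3 : (k/t+1)*t = t*(k/t)+t := by ring
    omega
  have hcast : ((t:ℕ):ℝ) = 2 ^ (n - m) := by rw [ht]; push_cast; ring
  have hpow : (2:ℝ) ^ m * 2 ^ (n - m) = 2 ^ n := by
    rw [← pow_add]; congr 1; omega
  have hpm : (0:ℝ) < 2 ^ m := by positivity
  have hpn : (0:ℝ) < 2 ^ n := by positivity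
  have hpt : (0:ℝ) < 2 ^ (n-m) := by positivity
  intro x hx
  obtain ⟨ha, hb⟩ := hx
  constructor
  · rw [← hq]
    push_cast
    rw [div_le_iff₀ hpm]
    calc ((k / t : ℕ):ℝ) = ((k/t :ℕ):ℝ) := rfl
      _ ≤ x * 2 ^ m := by
        have hc : (((k/t)*t : ℕ):ℝ) ≤ (k:ℝ) := by exact_mod_cast h1
        rw [Nat.cast_mul, hcast] at hc
        have hxk : (k:ℝ) / 2^n ≤ x := ha
        rw [div_le_iff₀ hpn] at hxk
        nlinarith [hc, hxk]
  · rw [← hq]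
    push_cast
    rw [lt_div_iff₀ hpm]
    have hc : ((k:ℝ) + 1) ≤ (((k/t:ℕ):ℝ) + 1) * 2^(n-m) := by
      have h3 : ((k+1 : ℕ):ℝ) ≤ (((k/t + 1)*t : ℕ):ℝ) := by exact_mod_cast h2
      rw [Nat.cast_mul, Nat.cast_add, Nat.cast_add, hcast] at h3
      push_cast at h3 ⊢
      linarith
    have hxb : x < ((k:ℝ)+1) / 2^n := hb
    rw [lt_div_iff₀ hpn] at hxb
    nlinarith [hc, hxb]

lemma dint_disjoint_same_lev (I J : Dy) (hm : I.val.1 = J.val.1) (hk : I.val.2 ≠ J.val.2) :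
    Disjoint (dint I) (dint J) := by
  rw [Set.disjoint_iff_forall_ne]
  intro x hx y hy hxy
  subst hxy
  obtain ⟨ha, hb⟩ := hx; obtain ⟨hc, hd⟩ := hy
  have hpn : (0:ℝ) < 2 ^ I.val.1 := by positivity
  rw [← hm] at hc hd
  rw [div_le_iff₀ hpn] at ha hc
  rw [lt_div_iff₀ hpn] at hb hd
  have e1 : (I.val.2 : ℝ) < (J.val.2:ℝ) + 1 := by nlinarith
  have e2 : (J.val.2 : ℝ) < (I.val.2:ℝ) + 1 := by nlinarith
  have f1 : I.val.2 < J.val.2 + 1 := by exact_mod_cast e1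
  have f2 : J.val.2 < I.val.2 + 1 := by exact_mod_cast e2
  exact hk (by omega)

lemma dint_sub_eq (I : Dy) :
    ((I.val.2:ℝ) + 1) / 2 ^ I.val.1 - (I.val.2:ℝ) / 2 ^ I.val.1 = dlen I := by
  have : (0:ℝ) < 2 ^ I.val.1 := by positivity
  unfold dlen; ring

lemma dyadic_sub_or_disj (I J : Dy) (hm : J.val.1 ≤ I.val.1) :
    dint I ⊆ dint J ∨ Disjoint (dint I) (dint J) := by
  set q := I.val.2 / 2 ^ (I.val.1 - J.val.1) with hq
  by_cases hqq : q = J.val.2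
  · exact Or.inl (dint_subset_of_lev_le I J hm hqq)
  · right
    have hqlt : q < 2 ^ J.val.1 := by
      rw [hq]
      rw [Nat.div_lt_iff_lt_mul ((by positivity))]
      calc I.val.2 < 2 ^ I.val.1 := I.property
        _ = 2 ^ J.val.1 * 2 ^ (I.val.1 - J.val.1) := by rw [← pow_add]; congr 1; omega
    set J' : Dy := ⟨(J.val.1, q), hqlt⟩ with hJ'
    have hsub : dint I ⊆ dint J' := dint_subset_of_lev_le I J' hm rfl
    have hdisj : Disjoint (dint J') (dint J) := dint_disjoint_same_lev J' J rfl hqq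
    exact hdisj.mono_left hsub

lemma dyadic_tricho (I J : Dy) :
    dint I ⊆ dint J ∨ dint J ⊆ dint I ∨ Disjoint (dint I) (dint J) := by
  rcases le_total J.val.1 I.val.1 with hm | hm
  · rcases dyadic_sub_or_disj I J hm with h | h
    · exact Or.inl h
    · exact Or.inr (Or.inr h)
  · rcases dyadic_sub_or_disj J I hm with h | h
    · exact Or.inr (Or.inl h)
    · exact Or.inr (Or.inr h.symm)

lemma dlen_le_of_subset {I J : Dy} (h : dint I ⊆ dint J) : dlen I ≤ dlen J := by
  have := measure_mono (μ := volume) h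
  rw [volume_dint, volume_dint] at this
  exact (ENNReal.ofReal_le_ofReal_iff (dlen_pos J).le).1 this

lemma dint_eq_of_subset_len {I J : Dy} (h : dint I ⊆ dint J) (hl : dlen J ≤ dlen I) :
    dint J ⊆ dint I := by
  have heq : dlen I = dlen J := le_antisymm (dlen_le_of_subset h) hl
  have hne : (I.val.2:ℝ) / 2 ^ I.val.1 < ((I.val.2:ℝ) + 1) / 2 ^ I.val.1 :=
    Set.nonempty_Ico.1 (dint_nonempty I)
  have e1 := dint_sub_eq I
  have e2 := dint_sub_eq J
  unfold dint at h ⊢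
  rw [Set.Ico_subset_Ico_iff hne] at h
  obtain ⟨h1, h2⟩ := h
  apply Set.Ico_subset_Ico <;> linarith

lemma exists_min_dint (s : Finset Dy) (hne : s.Nonempty)
    (hch : ∀ I ∈ s, ∀ J ∈ s, ¬ Disjoint (dint I) (dint J)) :
    ∃ I₀ ∈ s, ∀ I ∈ s, dint I₀ ⊆ dint I := by
  obtain ⟨I₀, hI₀, hmin⟩ := s.exists_min_image dlen hne
  refine ⟨I₀, hI₀, fun I hI => ?_⟩
  rcases dyadic_tricho I₀ I with h | h | h
  · exact h
  · exact dint_eq_of_subset_len h (hmin I hI)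
  · exact absurd h (hch I₀ hI₀ I hI)

section Jones
variable {κ : ℝ≥0∞} {ℐ : Set Dy} {ℬ : Dy → Set Dy} (h : JonesD κ ℐ ℬ)
include h

lemma bfin {I : Dy} (hI : I ∈ ℐ) : (ℬ I).Finite :=
  h.1.subset (Set.subset_biUnion_of_mem (u := ℬ) hI)

lemma uniqI {K : Dy} {I₀ I₁ : Dy} (h0 : I₀ ∈ ℐ) (h1 : I₁ ∈ ℐ)
    (hK0 : K ∈ ℬ I₀) (hK1 : K ∈ ℬ I₁) : I₀ = I₁ := by
  by_contra hne
  exact (h.2.2.2.1 I₀ h0 I₁ h1 hne).ne_of_mem hK0 hK1 rfl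

lemma Bop_apply_mem {a : Dy → ℝ} {I K : Dy} (hI : I ∈ ℐ) (hK : K ∈ ℬ I) :
    Bop ℐ ℬ a K = a I := by
  unfold Bop
  have huniq : ∀ b : {I : Dy // I ∈ ℐ ∧ K ∈ ℬ I}, b = ⟨I, hI, hK⟩ := by
    rintro ⟨J, hJ, hKJ⟩
    exact Subtype.ext (uniqI h hJ hI hKJ hK)
  rw [tsum_eq_single (⟨I, hI, hK⟩ : {I : Dy // I ∈ ℐ ∧ K ∈ ℬ I})
    (fun b hb => absurd (huniq b) hb)]

lemma Bop_apply_not_mem {a : Dy → ℝ} {K : Dy} (hK : ∀ I ∈ ℐ, K ∉ ℬ I) :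
    Bop ℐ ℬ a K = 0 := by
  unfold Bop
  have : IsEmpty {I : Dy // I ∈ ℐ ∧ K ∈ ℬ I} :=
    ⟨fun ⟨J, hJ, hKJ⟩ => hK J hJ hKJ⟩
  exact tsum_empty

lemma Ifin : ℐ.Finite := by
  have h𝒰 : (⋃ I ∈ ℐ, ℬ I).Finite := h.1
  haveI := h𝒰.to_subtype
  have hfin : Finite ↥ℐ := by
    refine Finite.of_injective (fun I : ↥ℐ =>
      (⟨(h.2.1 I I.2).some, Set.mem_biUnion I.2 (h.2.1 I I.2).some_mem⟩ :
        ↥(⋃ I ∈ ℐ, ℬ I))) ?_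
    rintro I J hIJ
    have hKI := (h.2.1 I I.2).some_mem
    have hKJ := (h.2.1 J J.2).some_mem
    rw [Subtype.mk.injEq] at hIJ
    rw [hIJ] at hKI
    exact Subtype.ext (uniqI h I.2 J.2 hKI hKJ)
  exact Set.finite_coe_iff.mp hfin

end Jones

lemma tsum_set_finite {M : Type*} [AddCommMonoid M] [TopologicalSpace M] [T2Space M]
    {s : Set Dy} (hs : s.Finite) (f : Dy → M) :
    ∑' (K : s), f ↑K = ∑ K ∈ hs.toFinset, f K := by
  haveI := hs.fintype
  rw [tsum_fintype]
  rw [Finset.sum_set_coe (f := f)]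
  congr 1
  ext K
  simp [Set.Finite.mem_toFinset]

section Jones2
variable {κ : ℝ≥0∞} {ℐ : Set Dy} {ℬ : Dy → Set Dy} (h : JonesD κ ℐ ℬ)
include h

lemma denom_pos {I : Dy} (hI : I ∈ ℐ) : 0 < ∑' K : ℬ I, dlen K.val := by
  rw [tsum_set_finite (bfin h hI)]
  apply Finset.sum_pos (fun K _ => dlen_pos K)
  obtain ⟨K, hK⟩ := h.2.1 I hI
  exact ⟨K, (bfin h hI).mem_toFinset.2 hK⟩

lemma Qop_apply_mem {a : Dy → ℝ} {I : Dy} (hI : I ∈ ℐ) :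
    Qop ℐ ℬ a I = (∑' K : ℬ I, a K.val * dlen K.val) / (∑' K : ℬ I, dlen K.val) := by
  unfold Qop; rw [Set.indicator_of_mem hI]

lemma Qop_apply_not_mem {a : Dy → ℝ} {I : Dy} (hI : I ∉ ℐ) : Qop ℐ ℬ a I = 0 := by
  unfold Qop; rw [Set.indicator_of_notMem hI]

lemma QB_id (a : Dy → ℝ) {I : Dy} (hI : I ∈ ℐ) : Qop ℐ ℬ (Bop ℐ ℬ a) I = a I := by
  rw [Qop_apply_mem h hI]
  have hnum : ∑' K : ℬ I, Bop ℐ ℬ a K.val * dlen K.val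
      = a I * ∑' K : ℬ I, dlen K.val := by
    rw [tsum_set_finite (bfin h hI) (fun K => Bop ℐ ℬ a K * dlen K),
      tsum_set_finite (bfin h hI) dlen, Finset.mul_sum]
    apply Finset.sum_congr rfl
    intro K hK
    rw [Bop_apply_mem h hI ((bfin h hI).mem_toFinset.1 hK)]
  rw [hnum, mul_div_assoc, div_self (denom_pos h hI).ne', mul_one]

lemma Qop_BQ_eq_Q (a : Dy → ℝ) :
    Qop ℐ ℬ (Bop ℐ ℬ (Qop ℐ ℬ a)) = Qop ℐ ℬ a := by
  funext I
  by_cases hI : I ∈ ℐ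
  · rw [QB_id h _ hI]
  · rw [Qop_apply_not_mem h hI, Qop_apply_not_mem h hI]

end Jones2

lemma sqFn_le_slNorm_sq (a : Dy → ℝ) (y : ℝ) : sqFn a y ≤ (slNorm a) ^ (2:ℝ) := by
  have h1 : (sqFn a y) ^ (1/2:ℝ) ≤ slNorm a := le_iSup (fun x => sqFn a x ^ (1/2:ℝ)) y
  calc sqFn a y = ((sqFn a y) ^ (1/2:ℝ)) ^ (2:ℝ) := by
        rw [← ENNReal.rpow_mul]; norm_num
    _ ≤ (slNorm a) ^ (2:ℝ) := ENNReal.rpow_le_rpow h1 (by norm_num)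

lemma le_slNorm_of_sq {b : Dy → ℝ} {C : ℝ≥0∞}
    (hb : ∀ x : ℝ, sqFn b x ≤ C ^ (2:ℝ)) : slNorm b ≤ C := by
  apply iSup_le
  intro x
  calc (sqFn b x) ^ (1/2:ℝ) ≤ (C ^ (2:ℝ)) ^ (1/2:ℝ) :=
        ENNReal.rpow_le_rpow (hb x) (by norm_num)
    _ = C := by rw [← ENNReal.rpow_mul]; norm_num

lemma sum_indicator_le (t : Finset Dy)
    (hdisj : ∀ K ∈ t, ∀ K' ∈ t, K ≠ K' → Disjoint (dint K) (dint K'))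
    (v : ℝ≥0∞) (x : ℝ) :
    ∑ K ∈ t, Set.indicator (dint K) (fun _ => v) x ≤ v := by
  by_cases hx : ∃ K ∈ t, x ∈ dint K
  · obtain ⟨K₀, hK₀, hxK₀⟩ := hx
    rw [Finset.sum_eq_single K₀]
    · rw [Set.indicator_of_mem hxK₀]
    · intro K hK hne
      have : x ∉ dint K := fun hxK =>
        (hdisj K hK K₀ hK₀ hne).ne_of_mem hxK hxK₀ rfl
      rw [Set.indicator_of_notMem this]
    · intro habs; exact absurd hK₀ habs
  · push_neg at hx
    rw [Finset.sum_eq_zero (fun K hK => Set.indicator_of_notMem (hx K hK) _)]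
    exact zero_le

section Jones3
variable {κ : ℝ≥0∞} {ℐ : Set Dy} {ℬ : Dy → Set Dy} (h : JonesD κ ℐ ℬ)
include h

lemma sqFn_Bop_le (c : Dy → ℝ) (x : ℝ) :
    sqFn (Bop ℐ ℬ c) x ≤ (slNorm c) ^ (2:ℝ) := by
  classical
  set 𝒰 : Finset Dy := h.1.toFinset with h𝒰
  set ℐfin : Finset Dy := (Ifin h).toFinset with hℐ
  have hnotin : ∀ K ∉ 𝒰, ∀ I ∈ ℐ, K ∉ ℬ I := by
    intro K hK I hI hKI
    exact hK (h.1.mem_toFinset.2 (Set.mem_biUnion hI hKI))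
  -- step 1: tsum = finite sum over 𝒰
  have step1 : sqFn (Bop ℐ ℬ c) x
      = ∑ K ∈ 𝒰, Set.indicator (dint K) (fun _ => ENNReal.ofReal ((Bop ℐ ℬ c K) ^ 2)) x := by
    apply tsum_eq_sum
    intro K hK
    rw [Bop_apply_not_mem h (hnotin K hK)]
    simp
  -- step 2: split over I
  have hmem𝒰 : ∀ K : Dy, K ∈ 𝒰 ↔ ∃ I ∈ ℐ, K ∈ ℬ I := by
    intro K; rw [h𝒰, Set.Finite.mem_toFinset, Set.mem_iUnion₂]; simp only [exists_prop]
  have h𝒰split : 𝒰 = ℐfin.biUnion (fun I => 𝒰.filter (· ∈ ℬ I)) := by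
    ext K
    rw [Finset.mem_biUnion]
    constructor
    · intro hK
      obtain ⟨I, hI, hKI⟩ := (hmem𝒰 K).1 hK
      exact ⟨I, (Ifin h).mem_toFinset.2 hI, Finset.mem_filter.2 ⟨hK, hKI⟩⟩
    · rintro ⟨I, hI, hK⟩
      exact (Finset.mem_filter.1 hK).1
  have hpair : ∀ I₀ ∈ ℐfin, ∀ I₁ ∈ ℐfin, I₀ ≠ I₁ →
      Disjoint (𝒰.filter (· ∈ ℬ I₀)) (𝒰.filter (· ∈ ℬ I₁)) := by
    intro I₀ h0 I₁ h1 hne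
    rw [Finset.disjoint_left]
    intro K hK0 hK1
    rw [Finset.mem_filter] at hK0 hK1
    exact (h.2.2.2.1 I₀ ((Ifin h).mem_toFinset.1 h0) I₁ ((Ifin h).mem_toFinset.1 h1)
      hne).ne_of_mem hK0.2 hK1.2 rfl
  have step2 : ∑ K ∈ 𝒰, Set.indicator (dint K) (fun _ => ENNReal.ofReal ((Bop ℐ ℬ c K) ^ 2)) x
      = ∑ I ∈ ℐfin, ∑ K ∈ 𝒰.filter (· ∈ ℬ I),
          Set.indicator (dint K) (fun _ => ENNReal.ofReal ((c I) ^ 2)) x := by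
    conv_lhs => rw [h𝒰split]
    rw [Finset.sum_biUnion (fun I₀ h0 I₁ h1 hne =>
      hpair I₀ (Finset.mem_coe.1 h0) I₁ (Finset.mem_coe.1 h1) hne)]
    apply Finset.sum_congr rfl
    intro I hI
    apply Finset.sum_congr rfl
    intro K hK
    rw [Finset.mem_filter] at hK
    rw [Bop_apply_mem h ((Ifin h).mem_toFinset.1 hI) hK.2]
  -- step 3: inner sums bounded by union indicator
  have step3 : ∀ I ∈ ℐfin, ∑ K ∈ 𝒰.filter (· ∈ ℬ I),
        Set.indicator (dint K) (fun _ => ENNReal.ofReal ((c I) ^ 2)) x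
      ≤ Set.indicator (unionBD ℬ I) (fun _ => ENNReal.ofReal ((c I) ^ 2)) x := by
    intro I hI
    have hImem := (Ifin h).mem_toFinset.1 hI
    by_cases hxu : x ∈ unionBD ℬ I
    · rw [Set.indicator_of_mem hxu]
      apply sum_indicator_le
      intro K hK K' hK' hne
      rw [Finset.mem_filter] at hK hK'
      exact h.2.2.1 I hImem hK.2 hK'.2 hne
    · rw [Set.indicator_of_notMem hxu]
      rw [Finset.sum_eq_zero]
      intro K hK
      rw [Finset.mem_filter] at hK
      have : x ∉ dint K := fun hxK => hxu (Set.mem_biUnion hK.2 hxK)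
      rw [Set.indicator_of_notMem this]
  -- step 4: the surviving indices form a chain
  set D : Finset Dy := ℐfin.filter (fun I => x ∈ unionBD ℬ I) with hD
  have step4 : ∑ I ∈ ℐfin, Set.indicator (unionBD ℬ I) (fun _ => ENNReal.ofReal ((c I) ^ 2)) x
      = ∑ I ∈ D, ENNReal.ofReal ((c I) ^ 2) := by
    rw [hD, Finset.sum_filter]
    apply Finset.sum_congr rfl
    intro I _
    by_cases hxu : x ∈ unionBD ℬ I
    · rw [Set.indicator_of_mem hxu, if_pos hxu]
    · rw [Set.indicator_of_notMem hxu, if_neg hxu]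
  have hfinal : ∑ I ∈ D, ENNReal.ofReal ((c I) ^ 2) ≤ (slNorm c) ^ (2:ℝ) := by
    rcases D.eq_empty_or_nonempty with hDe | hDne
    · rw [hDe, Finset.sum_empty]; exact zero_le
    · have hchain : ∀ I ∈ D, ∀ J ∈ D, ¬ Disjoint (dint I) (dint J) := by
        intro I hI J hJ hdisj
        rw [hD, Finset.mem_filter] at hI hJ
        have := h.2.2.2.2.1 I ((Ifin h).mem_toFinset.1 hI.1) J ((Ifin h).mem_toFinset.1 hJ.1) hdisj
        exact this.ne_of_mem hI.2 hJ.2 rfl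
      obtain ⟨I₀, hI₀, hmin⟩ := exists_min_dint D hDne hchain
      obtain ⟨y, hy⟩ := dint_nonempty I₀
      calc ∑ I ∈ D, ENNReal.ofReal ((c I) ^ 2)
          = ∑ I ∈ D, Set.indicator (dint I) (fun _ => ENNReal.ofReal ((c I) ^ 2)) y := by
            apply Finset.sum_congr rfl
            intro I hI
            rw [Set.indicator_of_mem (hmin I hI hy)]
        _ ≤ sqFn c y := Summable.sum_le_tsum D (fun _ _ => zero_le) ENNReal.summable
        _ ≤ (slNorm c) ^ (2:ℝ) := sqFn_le_slNorm_sq c y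
  calc sqFn (Bop ℐ ℬ c) x
      = _ := step1
    _ = _ := step2
    _ ≤ ∑ I ∈ ℐfin, Set.indicator (unionBD ℬ I) (fun _ => ENNReal.ofReal ((c I) ^ 2)) x :=
        Finset.sum_le_sum step3
    _ = _ := step4
    _ ≤ _ := hfinal

lemma slNorm_Bop_le (c : Dy → ℝ) : slNorm (Bop ℐ ℬ c) ≤ slNorm c :=
  le_slNorm_of_sq (sqFn_Bop_le h c)

end Jones3

lemma measurableSet_dint (K : Dy) : MeasurableSet (dint K) := measurableSet_Ico

lemma measurableSet_unionBD (ℬ : Dy → Set Dy) (I : Dy) : MeasurableSet (unionBD ℬ I) :=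
  MeasurableSet.biUnion (Set.to_countable _) (fun _ _ => measurableSet_dint _)

section Jones4
variable {κ : ℝ≥0∞} {ℐ : Set Dy} {ℬ : Dy → Set Dy} (h : JonesD κ ℐ ℬ)
include h

lemma unionBD_eq_biUnion {I : Dy} (hI : I ∈ ℐ) :
    unionBD ℬ I = ⋃ K ∈ (bfin h hI).toFinset, dint K := by
  unfold unionBD
  ext y
  simp only [Set.mem_iUnion, Set.Finite.mem_toFinset, Finset.mem_coe]

lemma vol_unionBD_eq {I : Dy} (hI : I ∈ ℐ) :
    volume (unionBD ℬ I) = ENNReal.ofReal (∑ K ∈ (bfin h hI).toFinset, dlen K) := by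
  rw [unionBD_eq_biUnion h hI, measure_biUnion_finset ?_ (fun K _ => measurableSet_dint K)]
  · rw [ENNReal.ofReal_sum_of_nonneg (fun K _ => (dlen_pos K).le)]
    exact Finset.sum_congr rfl (fun K _ => volume_dint K)
  · intro K hK K' hK' hne
    exact h.2.2.1 I hI ((bfin h hI).mem_toFinset.1 hK) ((bfin h hI).mem_toFinset.1 hK') hne

lemma vol_unionBD_pos {I : Dy} (hI : I ∈ ℐ) : volume (unionBD ℬ I) ≠ 0 := by
  have hpos : 0 < ∑ K ∈ (bfin h hI).toFinset, dlen K := by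
    have := denom_pos h hI
    rwa [tsum_set_finite (bfin h hI) dlen] at this
  rw [vol_unionBD_eq h hI]
  exact (ENNReal.ofReal_pos.2 hpos).ne' 

lemma vol_unionBD_ne_top {I : Dy} (hI : I ∈ ℐ) : volume (unionBD ℬ I) ≠ ⊤ := by
  rw [vol_unionBD_eq h hI]; exact ENNReal.ofReal_ne_top

lemma J4_conseq (hκ0 : κ ≠ 0) (hκt : κ ≠ ⊤) {I₀ I K : Dy} (hI₀ : I₀ ∈ ℐ) (hI : I ∈ ℐ)
    (hsub : dint I₀ ⊆ dint I) (hK : K ∈ ℬ I) :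
    volume (dint K) ≤ κ * volume (unionBD ℬ I) * (volume (unionBD ℬ I₀))⁻¹
      * volume (dint K ∩ unionBD ℬ I₀) := by
  have hj := h.2.2.2.2.2.2 I₀ hI₀ I hI hsub K hK
  set vK := volume (dint K) with hvK
  set v₀ := volume (unionBD ℬ I₀)
  set vI := volume (unionBD ℬ I)
  set w := volume (dint K ∩ unionBD ℬ I₀)
  have hvK0 : vK ≠ 0 := by
    rw [hvK, volume_dint, ← ENNReal.ofReal_zero, Ne,
      ENNReal.ofReal_eq_ofReal_iff (dlen_pos K).le le_rfl]
    exact (dlen_pos K).ne'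
  have hvKt : vK ≠ ⊤ := by rw [hvK, volume_dint]; exact ENNReal.ofReal_ne_top
  have hv₀0 : v₀ ≠ 0 := vol_unionBD_pos h hI₀
  have hv₀t : v₀ ≠ ⊤ := vol_unionBD_ne_top h hI₀
  have hvI0 : vI ≠ 0 := vol_unionBD_pos h hI
  have hvIt : vI ≠ ⊤ := vol_unionBD_ne_top h hI
  have h1 : κ⁻¹ * (v₀ / vI) * vK ≤ w := by
    calc κ⁻¹ * (v₀ / vI) * vK ≤ (w / vK) * vK := mul_le_mul_left hj vK
      _ = w := ENNReal.div_mul_cancel hvK0 hvKt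
  calc vK = (κ * vI * v₀⁻¹) * (κ⁻¹ * (v₀ / vI) * vK) := by
        rw [div_eq_mul_inv,
          show κ * vI * v₀⁻¹ * (κ⁻¹ * (v₀ * vI⁻¹) * vK)
            = (κ * κ⁻¹) * (vI * vI⁻¹) * (v₀ * v₀⁻¹) * vK by ring,
          ENNReal.mul_inv_cancel hκ0 hκt, ENNReal.mul_inv_cancel hvI0 hvIt,
          ENNReal.mul_inv_cancel hv₀0 hv₀t, one_mul, one_mul, one_mul]
    _ ≤ (κ * vI * v₀⁻¹) * w := mul_le_mul_right h1 _

end Jones4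

lemma a_eq_zero_of_slNorm_zero {a : Dy → ℝ} (hsl : slNorm a = 0) (K : Dy) : a K = 0 := by
  obtain ⟨y, hy⟩ := dint_nonempty K
  have h1 : ENNReal.ofReal ((a K) ^ 2) ≤ sqFn a y := by
    have := ENNReal.le_tsum
      (f := fun I => Set.indicator (dint I) (fun _ => ENNReal.ofReal ((a I) ^ 2)) y) K
    rwa [Set.indicator_of_mem hy] at this
  have h2 : sqFn a y ≤ (slNorm a) ^ (2:ℝ) := sqFn_le_slNorm_sq a y
  rw [hsl, ENNReal.zero_rpow_of_pos (by norm_num)] at h2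
  have h3 : ENNReal.ofReal ((a K) ^ 2) = 0 := le_antisymm (h1.trans h2) (zero_le)
  have h4 := ENNReal.ofReal_eq_zero.1 h3
  nlinarith [sq_nonneg (a K)]

section Jones5
variable {κ : ℝ≥0∞} {ℐ : Set Dy} {ℬ : Dy → Set Dy} (h : JonesD κ ℐ ℬ)
include h

lemma sqFn_Qop_le (a : Dy → ℝ) (x : ℝ) :
    sqFn (Qop ℐ ℬ a) x ≤ κ * (slNorm a) ^ (2:ℝ) := by
  classical
  set ℐfin : Finset Dy := (Ifin h).toFinset with hℐf
  set 𝒰 : Finset Dy := h.1.toFinset with h𝒰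
  set BF : Dy → Finset Dy := fun I => 𝒰.filter (· ∈ ℬ I) with hBFdef
  have step1 : sqFn (Qop ℐ ℬ a) x = ∑ I ∈ ℐfin,
      Set.indicator (dint I) (fun _ => ENNReal.ofReal ((Qop ℐ ℬ a I) ^ 2)) x := by
    apply tsum_eq_sum
    intro I hI
    have hni : I ∉ ℐ := fun hmem => hI ((Ifin h).mem_toFinset.2 hmem)
    rw [Qop_apply_not_mem h hni]
    simp
  set D : Finset Dy := ℐfin.filter (fun I => x ∈ dint I) with hD
  have step2 : ∑ I ∈ ℐfin,
        Set.indicator (dint I) (fun _ => ENNReal.ofReal ((Qop ℐ ℬ a I) ^ 2)) x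
      = ∑ I ∈ D, ENNReal.ofReal ((Qop ℐ ℬ a I) ^ 2) := by
    rw [hD, Finset.sum_filter]
    apply Finset.sum_congr rfl
    intro I _
    by_cases hx : x ∈ dint I
    · rw [Set.indicator_of_mem hx, if_pos hx]
    · rw [Set.indicator_of_notMem hx, if_neg hx]
  rcases D.eq_empty_or_nonempty with hDe | hDne
  · rw [step1, step2, hDe, Finset.sum_empty]; exact zero_le
  obtain ⟨Iw, hIw⟩ := hDne
  have hIwℐ : Iw ∈ ℐ := (Ifin h).mem_toFinset.1 (Finset.mem_filter.1 hIw).1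
  have hκ0 : κ ≠ 0 := by
    intro hk
    obtain ⟨K, hK⟩ := h.2.1 Iw hIwℐ
    have hj := h.2.2.2.2.2.2 Iw hIwℐ Iw hIwℐ subset_rfl K hK
    rw [hk, ENNReal.inv_zero,
      ENNReal.div_self (vol_unionBD_pos h hIwℐ) (vol_unionBD_ne_top h hIwℐ), mul_one] at hj
    have hvK0 : volume (dint K) ≠ 0 := by
      rw [volume_dint]; exact (ENNReal.ofReal_pos.2 (dlen_pos K)).ne'
    have hwt : volume (dint K ∩ unionBD ℬ Iw) ≠ ⊤ := by
      refine ne_top_of_le_ne_top ?_ (measure_mono Set.inter_subset_left)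
      rw [volume_dint]; exact ENNReal.ofReal_ne_top
    exact (ENNReal.div_lt_top hwt hvK0).ne (top_le_iff.1 hj)
  by_cases hκt : κ = ⊤
  · by_cases hsl : slNorm a = 0
    · have hQ0 : ∀ I, Qop ℐ ℬ a I = 0 := by
        intro I
        by_cases hI : I ∈ ℐ
        · rw [Qop_apply_mem h hI]
          have : ∀ K : ℬ I, a K.val * dlen K.val = 0 := by
            intro K; rw [a_eq_zero_of_slNorm_zero hsl K.val, zero_mul]
          rw [tsum_congr this, tsum_zero, zero_div]
        · exact Qop_apply_not_mem h hI
      rw [step1, step2, Finset.sum_eq_zero]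
      · exact zero_le
      · intro I _; rw [hQ0 I]; simp
    · have hne : (slNorm a) ^ (2:ℝ) ≠ 0 := by
        rw [Ne, ENNReal.rpow_eq_zero_iff]
        rintro (⟨h1, _⟩ | ⟨_, h2⟩)
        · exact hsl h1
        · norm_num at h2
      rw [hκt, ENNReal.top_mul hne]
      exact le_top
  -- main case : κ ≠ 0, κ ≠ ⊤
  have hchain : ∀ I ∈ D, ∀ J ∈ D, ¬ Disjoint (dint I) (dint J) := by
    intro I hI J hJ hdisj
    rw [hD, Finset.mem_filter] at hI hJ
    exact hdisj.ne_of_mem hI.2 hJ.2 rfl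
  obtain ⟨I₀, hI₀D, hmin⟩ := exists_min_dint D ⟨Iw, hIw⟩ hchain
  have hI₀ℐ : I₀ ∈ ℐ := (Ifin h).mem_toFinset.1 (Finset.mem_filter.1 hI₀D).1
  set U₀ : Set ℝ := unionBD ℬ I₀ with hU₀
  set v₀ : ℝ≥0∞ := volume U₀ with hv₀
  have hv₀0 : v₀ ≠ 0 := vol_unionBD_pos h hI₀ℐ
  have hv₀t : v₀ ≠ ⊤ := vol_unionBD_ne_top h hI₀ℐ
  set T : Dy → ℝ≥0∞ :=
    fun I => ∑ K ∈ BF I, ENNReal.ofReal ((a K) ^ 2) * volume (dint K ∩ U₀) with hT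
  have hBFtoF : ∀ {I : Dy} (hI : I ∈ ℐ), (bfin h hI).toFinset = BF I := by
    intro I hI
    ext K
    rw [Set.Finite.mem_toFinset, hBFdef]
    simp only [Finset.mem_filter]
    constructor
    · intro hK
      exact ⟨h.1.mem_toFinset.2 (Set.mem_biUnion hI hK), hK⟩
    · exact fun hK => hK.2
  have hmemℐ : ∀ I ∈ D, I ∈ ℐ := fun I hI =>
    (Ifin h).mem_toFinset.1 (Finset.mem_filter.1 hI).1
  -- per-index bound
  have hper : ∀ I ∈ D, ENNReal.ofReal ((Qop ℐ ℬ a I) ^ 2) ≤ κ * v₀⁻¹ * T I := by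
    intro I hID
    have hIℐ := hmemℐ I hID
    set Dn : ℝ := ∑ K ∈ BF I, dlen K with hDn
    have hDnpos : 0 < Dn := by
      apply Finset.sum_pos (fun K _ => dlen_pos K)
      obtain ⟨K, hK⟩ := h.2.1 I hIℐ
      exact ⟨K, (hBFtoF hIℐ) ▸ (bfin h hIℐ).mem_toFinset.2 hK⟩
    have hQval : Qop ℐ ℬ a I = (∑ K ∈ BF I, a K * dlen K) / Dn := by
      rw [Qop_apply_mem h hIℐ, tsum_set_finite (bfin h hIℐ) (fun K => a K * dlen K),
        tsum_set_finite (bfin h hIℐ) dlen, hBFtoF hIℐ]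
    set S₁ : ℝ := ∑ K ∈ BF I, (a K) ^ 2 * dlen K with hS₁
    have hCS : (∑ K ∈ BF I, a K * dlen K) ^ 2 ≤ S₁ * Dn := by
      apply Finset.sum_sq_le_sum_mul_sum_of_sq_eq_mul (BF I)
        (fun K _ => mul_nonneg (sq_nonneg _) (dlen_pos K).le) (fun K _ => (dlen_pos K).le)
        (fun K _ => by ring)
    have hQsq : (Qop ℐ ℬ a I) ^ 2 ≤ S₁ / Dn := by
      rw [hQval, div_pow, div_le_div_iff₀ (pow_pos hDnpos 2) hDnpos]
      nlinarith [hCS, hDnpos]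
    have hsubI : dint I₀ ⊆ dint I := hmin I hID
    set vI : ℝ≥0∞ := volume (unionBD ℬ I) with hvI
    have hvI0 : vI ≠ 0 := vol_unionBD_pos h hIℐ
    have hvIt : vI ≠ ⊤ := vol_unionBD_ne_top h hIℐ
    have hofS : ENNReal.ofReal S₁ ≤ κ * vI * v₀⁻¹ * T I := by
      rw [hS₁, ENNReal.ofReal_sum_of_nonneg (fun K _ => mul_nonneg (sq_nonneg _) (dlen_pos K).le)]
      calc ∑ K ∈ BF I, ENNReal.ofReal ((a K) ^ 2 * dlen K)
          = ∑ K ∈ BF I, ENNReal.ofReal ((a K) ^ 2) * volume (dint K) := by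
            apply Finset.sum_congr rfl
            intro K _
            rw [ENNReal.ofReal_mul (sq_nonneg _), volume_dint]
        _ ≤ ∑ K ∈ BF I, ENNReal.ofReal ((a K) ^ 2)
              * (κ * vI * v₀⁻¹ * volume (dint K ∩ U₀)) := by
            apply Finset.sum_le_sum
            intro K hK
            have hKB : K ∈ ℬ I := (Finset.mem_filter.1 hK).2
            exact mul_le_mul_right (J4_conseq h hκ0 hκt hI₀ℐ hIℐ hsubI hKB) _
        _ = κ * vI * v₀⁻¹ * T I := by
            rw [hT, Finset.mul_sum]
            apply Finset.sum_congr rfl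
            intro K _
            ring
    have hvolDn : vI = ENNReal.ofReal Dn := by
      rw [hvI, vol_unionBD_eq h hIℐ, hBFtoF hIℐ]
    calc ENNReal.ofReal ((Qop ℐ ℬ a I) ^ 2)
        ≤ ENNReal.ofReal (S₁ / Dn) := ENNReal.ofReal_le_ofReal hQsq
      _ = ENNReal.ofReal S₁ / ENNReal.ofReal Dn := ENNReal.ofReal_div_of_pos hDnpos
      _ = ENNReal.ofReal S₁ / vI := by rw [hvolDn]
      _ ≤ (κ * vI * v₀⁻¹ * T I) / vI := ENNReal.div_le_div_right hofS vI
      _ = κ * v₀⁻¹ * T I := by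
          rw [div_eq_mul_inv,
            show κ * vI * v₀⁻¹ * T I * vI⁻¹ = κ * v₀⁻¹ * T I * (vI * vI⁻¹) by ring,
            ENNReal.mul_inv_cancel hvI0 hvIt, mul_one]
  -- disjointness of the collections
  have hpairdisj : ∀ I₁ ∈ (D : Set Dy), ∀ I₂ ∈ (D : Set Dy), I₁ ≠ I₂ →
      Disjoint (BF I₁) (BF I₂) := by
    intro I₁ h1 I₂ h2 hne
    rw [Finset.disjoint_left]
    intro K hK1 hK2
    rw [Finset.mem_filter] at hK1 hK2
    exact (h.2.2.2.1 I₁ (hmemℐ I₁ h1) I₂ (hmemℐ I₂ h2) hne).ne_of_mem hK1.2 hK2.2 rfl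
  -- integral representation and bound of ∑ T
  have hTint : ∀ I ∈ D, T I = ∫⁻ y in U₀,
      (∑ K ∈ BF I, Set.indicator (dint K) (fun _ => ENNReal.ofReal ((a K) ^ 2)) y) := by
    intro I _
    rw [lintegral_finset_sum _ (fun K _ => measurable_const.indicator (measurableSet_dint K))]
    apply Finset.sum_congr rfl
    intro K _
    rw [lintegral_indicator_const (measurableSet_dint K),
      Measure.restrict_apply (measurableSet_dint K)]
  have hpw : ∀ y : ℝ, ∑ I ∈ D, ∑ K ∈ BF I,
      Set.indicator (dint K) (fun _ => ENNReal.ofReal ((a K) ^ 2)) y ≤ sqFn a y := by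
    intro y
    rw [← Finset.sum_biUnion hpairdisj]
    exact Summable.sum_le_tsum _ (fun _ _ => zero_le) ENNReal.summable
  have hsumT : ∑ I ∈ D, T I ≤ (slNorm a) ^ (2:ℝ) * v₀ := by
    calc ∑ I ∈ D, T I
        = ∫⁻ y in U₀, ∑ I ∈ D, ∑ K ∈ BF I,
            Set.indicator (dint K) (fun _ => ENNReal.ofReal ((a K) ^ 2)) y := by
          rw [Finset.sum_congr rfl hTint,
            ← lintegral_finset_sum D (fun I _ => Finset.measurable_sum _
              (fun K _ => measurable_const.indicator (measurableSet_dint K)))]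
      _ ≤ ∫⁻ y in U₀, sqFn a y := lintegral_mono (fun y => hpw y)
      _ ≤ ∫⁻ _ in U₀, (slNorm a) ^ (2:ℝ) := lintegral_mono (fun y => sqFn_le_slNorm_sq a y)
      _ = (slNorm a) ^ (2:ℝ) * v₀ := setLIntegral_const U₀ _
  calc sqFn (Qop ℐ ℬ a) x = ∑ I ∈ D, ENNReal.ofReal ((Qop ℐ ℬ a I) ^ 2) :=
        step1.trans step2
    _ ≤ ∑ I ∈ D, κ * v₀⁻¹ * T I := Finset.sum_le_sum hper
    _ = κ * v₀⁻¹ * ∑ I ∈ D, T I := (Finset.mul_sum _ _ _).symm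
    _ ≤ κ * v₀⁻¹ * ((slNorm a) ^ (2:ℝ) * v₀) := mul_le_mul_right hsumT _
    _ = κ * (slNorm a) ^ (2:ℝ) := by
        rw [show κ * v₀⁻¹ * ((slNorm a) ^ (2:ℝ) * v₀)
            = κ * (slNorm a) ^ (2:ℝ) * (v₀ * v₀⁻¹) by ring,
          ENNReal.mul_inv_cancel hv₀0 hv₀t, mul_one]

lemma slNorm_Qop_le (a : Dy → ℝ) :
    slNorm (Qop ℐ ℬ a) ≤ κ ^ (1/2:ℝ) * slNorm a := by
  apply le_slNorm_of_sq
  intro x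
  have hrw : (κ ^ (1/2:ℝ) * slNorm a) ^ (2:ℝ) = κ * (slNorm a) ^ (2:ℝ) := by
    rw [ENNReal.mul_rpow_of_nonneg _ _ (by norm_num : (0:ℝ) ≤ 2), ← ENNReal.rpow_mul]
    norm_num
  rw [hrw]
  exact sqFn_Qop_le h a x

end Jones5

/-- under Jones' conditions, Q ∘ B is the identity on SL^∞ (on the
coefficients indexed by ℐ); consequently P = B ∘ Q is a bounded projection of norm
at most κ^{1/2}, the range of B is complemented, and B is an isomorphism onto its
range (it is bounded below on series supported on ℐ). -/
theorem Qop_Bop_eq_id (κ : ℝ≥0∞) (ℐ : Set Dy) (ℬ : Dy → Set Dy)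
    (h : JonesD κ ℐ ℬ) :
    (∀ a : Dy → ℝ, ∀ I ∈ ℐ, Qop ℐ ℬ (Bop ℐ ℬ a) I = a I) ∧
    (∀ a : Dy → ℝ,
      Bop ℐ ℬ (Qop ℐ ℬ (Bop ℐ ℬ (Qop ℐ ℬ a))) = Bop ℐ ℬ (Qop ℐ ℬ a)) ∧
    (∀ a : Dy → ℝ,
      slNorm (Bop ℐ ℬ (Qop ℐ ℬ a)) ≤ κ ^ (1 / 2 : ℝ) * slNorm a) ∧
    (∀ a : Dy → ℝ, (∀ I ∉ ℐ, a I = 0) →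
      slNorm a ≤ κ ^ (1 / 2 : ℝ) * slNorm (Bop ℐ ℬ a)) := by
  constructor
  · exact fun a I hI => QB_id h a hI
  constructor
  · exact fun a => congrArg (Bop ℐ ℬ) (Qop_BQ_eq_Q h a)
  constructor
  · exact fun a => (slNorm_Bop_le h (Qop ℐ ℬ a)).trans (slNorm_Qop_le h a)
  · intro a ha
    have heq : Qop ℐ ℬ (Bop ℐ ℬ a) = a := by
      funext I
      by_cases hI : I ∈ ℐ
      · exact QB_id h a hI
      · rw [Qop_apply_not_mem h hI, ha I hI]
    calc slNorm a = slNorm (Qop ℐ ℬ (Bop ℐ ℬ a)) := by rw [heq]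
      _ ≤ κ ^ (1 / 2 : ℝ) * slNorm (Bop ℐ ℬ a) := slNorm_Qop_le h (Bop ℐ ℬ a)


end
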